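/- arXiv:1608.01488 — 2 statements merged into one kernel-verified Lean document; each statement's English description precedes it below -/
import Mathlib

section
/- Let G be a connected planar graph on n ≥ 5 vertices and let r ∈ V(G) be a vertex of degree at most 2. Then sn₂(G, r) = n − 1, i.e., two firefighters can save all vertices except r itself. -/
/-- The set of vertices on fire after `t` fire-spread rounds, when the fire breaks out
at `v` and the firefighters protect the vertices of `P s` in round `s + 1` (protection
happens just before the `s`-th spread step and is permanent). -/
def burnedSet {V : Type*} (G : SimpleGraph V) (v : V) (P : ℕ → Set V) : ℕ → Set V
  | 0 => {v}
  | t + 1 => burnedSet G v P t ∪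
      {w | (∃ u ∈ burnedSet G v P t, G.Adj u w) ∧ ∀ s ≤ t, w ∉ P s}

/-- A strategy `P` is valid for the per-round budgets `b` if in each round it protects
at most `b t` vertices, none of which are already on fire. -/
def ValidStrategy {V : Type*} (G : SimpleGraph V) (b : ℕ → ℕ) (v : V) (P : ℕ → Set V) : Prop :=
  ∀ t, (P t).Finite ∧ (P t).ncard ≤ b t ∧ Disjoint (P t) (burnedSet G v P t)

/-- `sn G b v` is the maximum number of vertices that can be saved (i.e. that never
catch fire) when the fire breaks out at `v` and the firefighters may protect at most
`b t` vertices in round `t + 1`. -/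
noncomputable def sn {V : Type*} (G : SimpleGraph V) (b : ℕ → ℕ) (v : V) : ℕ :=
  sSup {m | ∃ P, ValidStrategy G b v P ∧
    m = Nat.card {w : V | ∀ t, w ∉ burnedSet G v P t}}

/-- The surviving rate of `G` with per-round budgets `b` : the expected fraction of
vertices that can be saved when the starting vertex is chosen uniformly at random. -/
noncomputable def survivingRate {V : Type*} [Fintype V] (G : SimpleGraph V) (b : ℕ → ℕ) : ℝ :=
  (∑ v : V, (sn G b v : ℝ)) / (Fintype.card V : ℝ) ^ 2

/-- A plane embedding of a simple graph: vertices are points of the plane and edges are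
simple arcs between their endpoints, such that arcs avoid all other vertices and two
arcs of distinct edges meet only in common endpoints. -/
structure PlaneEmbedding {V : Type*} (G : SimpleGraph V) where
  pos : V → ℝ × ℝ
  arc : V → V → ℝ → ℝ × ℝ
  pos_inj : Function.Injective pos
  arc_cont : ∀ ⦃u v⦄, G.Adj u v → Continuous (arc u v)
  arc_injOn : ∀ ⦃u v⦄, G.Adj u v → Set.InjOn (arc u v) (Set.Icc 0 1)
  arc_zero : ∀ ⦃u v⦄, G.Adj u v → arc u v 0 = pos u
  arc_one : ∀ ⦃u v⦄, G.Adj u v → arc u v 1 = pos v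
  arc_symm : ∀ ⦃u v⦄, G.Adj u v → ∀ t, arc v u t = arc u v (1 - t)
  arc_avoid : ∀ ⦃u v⦄, G.Adj u v → ∀ w : V, pos w ∉ arc u v '' Set.Ioo 0 1
  arc_meet : ∀ ⦃u v x y⦄, G.Adj u v → G.Adj x y → s(u, v) ≠ s(x, y) →
      arc u v '' Set.Icc 0 1 ∩ arc x y '' Set.Icc 0 1 ⊆
        ({pos u, pos v} : Set (ℝ × ℝ)) ∩ {pos x, pos y}

/-- A graph is planar if it admits a plane embedding. -/
def IsPlanar {V : Type*} (G : SimpleGraph V) : Prop :=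
  Nonempty (PlaneEmbedding G)

/-- Observation 3.1 (first case): if the fire starts at a vertex of degree at most 2 in
a connected planar graph on `n ≥ 5` vertices, two firefighters can save all the
remaining `n - 1` vertices. -/
theorem sn_two_of_degree_le_two {V : Type} [Fintype V] (G : SimpleGraph V)
    [DecidableRel G.Adj] (hconn : G.Connected) (hplanar : IsPlanar G)
    (hn : 5 ≤ Fintype.card V) (r : V) (hr : G.degree r ≤ 2) :
    sn G (fun _ => 2) r = Fintype.card V - 1 := by
  classical
  set P : ℕ → Set V := fun t => if t = 0 then (G.neighborSet r) else ∅ with hP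
  have hburn : ∀ t, burnedSet G r P t = {r} := by
    intro t
    induction t with
    | zero => rfl
    | succ t ih =>
      show burnedSet G r P t ∪ _ = {r}
      rw [ih]
      apply Set.union_eq_self_of_subset_right
      rintro w ⟨⟨u, hu, hadj⟩, hnp⟩
      rw [Set.mem_singleton_iff] at hu
      subst hu
      exact absurd (by simp [hP, hadj] : w ∈ P 0) (hnp 0 (Nat.zero_le t))
  have hvalid : ValidStrategy G (fun _ => 2) r P := by
    intro t
    refine ⟨?_, ?_, ?_⟩
    · by_cases h : t = 0 <;> simp [hP, h, Set.toFinite]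
    · by_cases h : t = 0
      · have hd : (G.neighborSet r).ncard = G.degree r := by
          rw [Set.ncard_eq_toFinset_card', SimpleGraph.degree, SimpleGraph.neighborFinset_def]
        simp only [hP, h, if_pos]
        exact hd ▸ hr
      · simp [hP, h]
    · rw [hburn]
      by_cases h : t = 0
      · simp [hP, h, Set.disjoint_singleton_right]
      · simp [hP, h]
  have hsaved : {w : V | ∀ t, w ∉ burnedSet G r P t} = {r}ᶜ := by
    ext w
    simp only [Set.mem_setOf_eq, Set.mem_compl_iff, Set.mem_singleton_iff]
    constructor
    · intro h hw; exact h 0 (by simp [hw, burnedSet])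
    · intro h t; rw [hburn]; simpa using h
  have hcard : Nat.card {w : V | ∀ t, w ∉ burnedSet G r P t} = Fintype.card V - 1 := by
    rw [Nat.card_coe_set_eq, hsaved]
    simp [Set.ncard_eq_toFinset_card', Set.toFinset_compl, Finset.card_compl]
  have hmem : Fintype.card V - 1 ∈ {m | ∃ P, ValidStrategy G (fun _ => 2) r P ∧
      m = Nat.card {w : V | ∀ t, w ∉ burnedSet G r P t}} :=
    ⟨P, hvalid, hcard.symm⟩
  have hub : ∀ m ∈ {m | ∃ P, ValidStrategy G (fun _ => 2) r P ∧
      m = Nat.card {w : V | ∀ t, w ∉ burnedSet G r P t}}, m ≤ Fintype.card V - 1 := by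
    rintro m ⟨Q, hQ, rfl⟩
    rw [Nat.card_coe_set_eq]
    calc {w : V | ∀ t, w ∉ burnedSet G r Q t}.ncard
        ≤ ({r}ᶜ : Set V).ncard := by
          apply Set.ncard_le_ncard _ (Set.toFinite _)
          intro w hw
          simp only [Set.mem_compl_iff, Set.mem_singleton_iff]
          rintro rfl
          exact hw 0 rfl
      _ = Fintype.card V - 1 := by
          simp [Set.ncard_eq_toFinset_card', Set.toFinset_compl, Finset.card_compl]
  exact le_antisymm (csSup_le ⟨_, hmem⟩ hub) (le_csSup ⟨_, hub⟩ hmem)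
end

section
/- Let G be a finite simple graph whose vertex set is partitioned into four sets X, Y, Z, W such that: every vertex of X has degree at least 1; every vertex of Y has degree at least 3; every vertex of Z has degree at least 4; and every vertex of W either has degree at least 5, or has degree exactly 4 and at least 2 neighbours of degree at least 6. Then Σ_{v ∈ V(G)} deg(v) ≥ |X| + 3|Y| + 4|Z| + (9/2)|W|. -/
open Finset

/-- Arithmetic helper for the discharging bound. -/
lemma discharging_aux (d s r : ℕ) (c : ℝ) (hsd : s ≤ d) (hs6 : s ≠ 0 → 6 ≤ d)
    (hd : c ≤ (d : ℝ)) (hc : c ≤ 9 / 2) :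
    (d : ℝ) - (s : ℝ) / 4 + (r : ℝ) / 4 ≥ c := by
  rcases eq_or_ne s 0 with h | h
  · subst h
    have hr : (0 : ℝ) ≤ (r : ℝ) := by positivity
    simp only [Nat.cast_zero]
    linarith
  · have h6 : (6 : ℝ) ≤ (d : ℝ) := by exact_mod_cast hs6 h
    have hsd' : (s : ℝ) ≤ (d : ℝ) := by exact_mod_cast hsd
    have hr : (0 : ℝ) ≤ (r : ℝ) := by positivity
    linarith

/-- Inequality (2) of the paper: if the vertex set of a finite simple graph is
partitioned into `X`, `Y`, `Z`, `W` where vertices of `X`, `Y`, `Z` have degree at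
least 1, 3, 4 respectively, and every vertex of `W` has degree at least 5 or has degree
exactly 4 with at least two neighbours of degree at least 6, then
`∑ deg(v) ≥ |X| + 3|Y| + 4|Z| + (9/2)|W|`. -/
theorem degree_sum_lower_bound {V : Type} [Fintype V] [DecidableEq V]
    (G : SimpleGraph V) [DecidableRel G.Adj]
    (X Y Z W : Finset V)
    (hXY : Disjoint X Y) (hXZ : Disjoint X Z) (hXW : Disjoint X W)
    (hYZ : Disjoint Y Z) (hYW : Disjoint Y W) (hZW : Disjoint Z W)
    (hcover : X ∪ Y ∪ Z ∪ W = Finset.univ)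
    (hX : ∀ v ∈ X, 1 ≤ G.degree v)
    (hY : ∀ v ∈ Y, 3 ≤ G.degree v)
    (hZ : ∀ v ∈ Z, 4 ≤ G.degree v)
    (hW : ∀ v ∈ W, 5 ≤ G.degree v ∨
      (G.degree v = 4 ∧ 2 ≤ ((G.neighborFinset v).filter fun w => 6 ≤ G.degree w).card)) :
    (∑ v : V, (G.degree v : ℝ)) ≥
      (X.card : ℝ) + 3 * Y.card + 4 * Z.card + 9 / 2 * W.card := by
  classical
  -- W4 : degree-4 vertices of W
  set W4 : Finset V := W.filter (fun v => G.degree v = 4) with hW4def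
  -- the charge indicator: 1 iff v sends 1/4 to w
  set F : V → V → ℕ := fun v w =>
    if G.Adj v w ∧ 6 ≤ G.degree v ∧ w ∈ W4 then 1 else 0 with hFdef
  set S : V → ℕ := fun v => ∑ w, F v w with hSdef
  set R : V → ℕ := fun v => ∑ w, F w v with hRdef
  -- total charge sent equals total charge received
  have hSR : (∑ v, (S v : ℝ)) = ∑ v, (R v : ℝ) := by
    have : (∑ v, S v) = ∑ v, R v := by
      simp only [hSdef, hRdef]
      exact Finset.sum_comm
    exact_mod_cast this
  -- S v ≤ degree v
  have hSle : ∀ v : V, S v ≤ G.degree v := by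
    intro v
    have h1 : S v ≤ ∑ w, (if G.Adj v w then 1 else 0) := by
      apply Finset.sum_le_sum
      intro w _
      simp only [hFdef]
      split_ifs with h1 h2
      · exact le_refl 1
      · exact absurd h1.1 h2
      · exact Nat.zero_le _
      · exact le_refl 0
    have h2 : (∑ w, (if G.Adj v w then 1 else 0)) = G.degree v := by
      rw [SimpleGraph.degree, SimpleGraph.neighborFinset_eq_filter, Finset.card_filter]
    omega
  -- S v ≠ 0 forces degree ≥ 6
  have hS6 : ∀ v : V, S v ≠ 0 → 6 ≤ G.degree v := by
    intro v hv
    by_contra h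
    apply hv
    apply Finset.sum_eq_zero
    intro w _
    simp only [hFdef]
    rw [if_neg]
    rintro ⟨-, h6, -⟩
    exact h h6
  -- for v ∈ W4, R v counts the neighbours of v of degree ≥ 6
  have hRW4 : ∀ v ∈ W4, R v = ((G.neighborFinset v).filter fun w => 6 ≤ G.degree w).card := by
    intro v hv
    have : R v = ∑ w, (if G.Adj v w ∧ 6 ≤ G.degree w then 1 else 0) := by
      apply Finset.sum_congr rfl
      intro w _
      simp only [hFdef]
      congr 1
      simp only [eq_iff_iff]
      constructor
      · rintro ⟨ha, h6, -⟩; exact ⟨ha.symm, h6⟩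
      · rintro ⟨ha, h6⟩; exact ⟨ha.symm, h6, hv⟩
    rw [this, SimpleGraph.neighborFinset_eq_filter, Finset.filter_filter, Finset.card_filter]
  -- target function
  set t : V → ℝ := fun v =>
    if v ∈ X then 1 else if v ∈ Y then 3 else if v ∈ Z then 4 else 9 / 2 with htdef
  -- pointwise discharging inequality
  have key : ∀ v ∈ Finset.univ, t v ≤ (G.degree v : ℝ) - (S v : ℝ) / 4 + (R v : ℝ) / 4 := by
    intro v _
    have hv : v ∈ X ∪ Y ∪ Z ∪ W := by rw [hcover]; exact Finset.mem_univ v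
    simp only [Finset.mem_union] at hv
    rcases hv with ((hvX | hvY) | hvZ) | hvW
    · have : t v = 1 := by simp [htdef, hvX]
      rw [this]
      exact discharging_aux _ _ _ _ (hSle v) (hS6 v)
        (by exact_mod_cast hX v hvX) (by norm_num)
    · have hnX : v ∉ X := Finset.disjoint_right.mp hXY hvY
      have : t v = 3 := by simp [htdef, hnX, hvY]
      rw [this]
      exact discharging_aux _ _ _ _ (hSle v) (hS6 v)
        (by exact_mod_cast hY v hvY) (by norm_num)
    · have hnX : v ∉ X := Finset.disjoint_right.mp hXZ hvZ
      have hnY : v ∉ Y := Finset.disjoint_right.mp hYZ hvZ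
      have : t v = 4 := by simp [htdef, hnX, hnY, hvZ]
      rw [this]
      exact discharging_aux _ _ _ _ (hSle v) (hS6 v)
        (by exact_mod_cast hZ v hvZ) (by norm_num)
    · have hnX : v ∉ X := Finset.disjoint_right.mp hXW hvW
      have hnY : v ∉ Y := Finset.disjoint_right.mp hYW hvW
      have hnZ : v ∉ Z := Finset.disjoint_right.mp hZW hvW
      have ht : t v = 9 / 2 := by simp [htdef, hnX, hnY, hnZ]
      rw [ht]
      rcases hW v hvW with h5 | ⟨h4, h2⟩
      · refine discharging_aux _ _ _ _ (hSle v) (hS6 v) ?_ (by norm_num)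
        have : (5 : ℝ) ≤ (G.degree v : ℝ) := by exact_mod_cast h5
        linarith
      · have hvW4 : v ∈ W4 := by
          simp only [hW4def, Finset.mem_filter]
          exact ⟨hvW, h4⟩
        have hS0 : S v = 0 := by
          by_contra h
          have := hS6 v h
          omega
        have hR2 : 2 ≤ R v := by rw [hRW4 v hvW4]; exact h2
        have hR2' : (2 : ℝ) ≤ (R v : ℝ) := by exact_mod_cast hR2
        rw [hS0, h4]
        push_cast
        linarith
  -- sum of targets equals the RHS
  have hdisj1 : Disjoint (X ∪ Y) Z := Finset.disjoint_union_left.mpr ⟨hXZ, hYZ⟩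
  have hdisj2 : Disjoint (X ∪ Y ∪ Z) W := by
    refine Finset.disjoint_union_left.mpr ⟨Finset.disjoint_union_left.mpr ⟨hXW, hYW⟩, hZW⟩
  have hT : (∑ v : V, t v) =
      (X.card : ℝ) + 3 * Y.card + 4 * Z.card + 9 / 2 * W.card := by
    have : (Finset.univ : Finset V) = X ∪ Y ∪ Z ∪ W := hcover.symm
    rw [this, Finset.sum_union hdisj2, Finset.sum_union hdisj1, Finset.sum_union hXY]
    have e1 : ∑ v ∈ X, t v = (X.card : ℝ) := by
      rw [Finset.sum_congr rfl (fun v hv => by simp [htdef, hv] : ∀ v ∈ X, t v = 1)]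
      simp
    have e2 : ∑ v ∈ Y, t v = 3 * (Y.card : ℝ) := by
      rw [Finset.sum_congr rfl (fun v hv => by
        have hnX : v ∉ X := Finset.disjoint_right.mp hXY hv
        simp [htdef, hnX, hv] : ∀ v ∈ Y, t v = 3)]
      rw [Finset.sum_const, nsmul_eq_mul, mul_comm]
    have e3 : ∑ v ∈ Z, t v = 4 * (Z.card : ℝ) := by
      rw [Finset.sum_congr rfl (fun v hv => by
        have hnX : v ∉ X := Finset.disjoint_right.mp hXZ hv
        have hnY : v ∉ Y := Finset.disjoint_right.mp hYZ hv
        simp [htdef, hnX, hnY, hv] : ∀ v ∈ Z, t v = 4)]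
      rw [Finset.sum_const, nsmul_eq_mul, mul_comm]
    have e4 : ∑ v ∈ W, t v = 9 / 2 * (W.card : ℝ) := by
      rw [Finset.sum_congr rfl (fun v hv => by
        have hnX : v ∉ X := Finset.disjoint_right.mp hXW hv
        have hnY : v ∉ Y := Finset.disjoint_right.mp hYW hv
        have hnZ : v ∉ Z := Finset.disjoint_right.mp hZW hv
        simp [htdef, hnX, hnY, hnZ] : ∀ v ∈ W, t v = 9 / 2)]
      rw [Finset.sum_const, nsmul_eq_mul, mul_comm]
    rw [e1, e2, e3, e4]
  -- conclude
  have hmain : (∑ v : V, t v) ≤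
      ∑ v : V, ((G.degree v : ℝ) - (S v : ℝ) / 4 + (R v : ℝ) / 4) :=
    Finset.sum_le_sum key
  have hcancel : (∑ v : V, ((G.degree v : ℝ) - (S v : ℝ) / 4 + (R v : ℝ) / 4)) =
      ∑ v : V, (G.degree v : ℝ) := by
    rw [Finset.sum_add_distrib, Finset.sum_sub_distrib, ← Finset.sum_div, ← Finset.sum_div,
      hSR]
    ring
  rw [hcancel] at hmain
  rw [hT] at hmain
  exact hmain
end
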